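/- arXiv:2411.05366 — 4 statements merged into one kernel-verified Lean document; each statement's English description precedes it below -/
import Mathlib

section
/- Let p be a prime, let f ∈ ℤ[x,y] be a polynomial with integer coefficients and nonzero constant term, and let x, y be integers with p ∣ f(x,y) and p ∤ f_x(x,y). Then the number of pairs (k,l) ∈ {0,1,…,p−1}² such that p ∣ f(x+kp, y+lp) and p² ∤ f(x+kp, y+lp) (i.e. the p-adic valuation of f(x+kp, y+lp) is exactly 1) equals p(p−1). -/
lemma taylor2 (p x y a b : ℤ) (f : MvPolynomial (Fin 2) ℤ) :
    ∃ t : ℤ, MvPolynomial.eval ![x + a*p, y + b*p] f =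
      MvPolynomial.eval ![x,y] f
      + p * (a * MvPolynomial.eval ![x,y] (MvPolynomial.pderiv 0 f)
           + b * MvPolynomial.eval ![x,y] (MvPolynomial.pderiv 1 f)) + p^2 * t := by
  induction f using MvPolynomial.induction_on with
  | C r => exact ⟨0, by simp⟩
  | add q r hq hr =>
      obtain ⟨t, ht⟩ := hq; obtain ⟨s, hs⟩ := hr
      exact ⟨t + s, by simp only [map_add, MvPolynomial.eval_add, ht, hs]; ring⟩
  | mul_X q n hq =>
      obtain ⟨t, ht⟩ := hq
      fin_cases n
      · refine ⟨(x + a*p)*t + a*(a * MvPolynomial.eval ![x,y] (MvPolynomial.pderiv 0 q)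
          + b * MvPolynomial.eval ![x,y] (MvPolynomial.pderiv 1 q)), ?_⟩
        simp only [MvPolynomial.pderiv_mul, MvPolynomial.pderiv_X, map_add, map_mul,
          MvPolynomial.eval_mul, MvPolynomial.eval_add, MvPolynomial.eval_X, Pi.single,
          Function.update, Matrix.cons_val_zero, Matrix.cons_val_one, Matrix.head_cons]
        simp
        linear_combination (x + a*p) * ht
      · refine ⟨(y + b*p)*t + b*(a * MvPolynomial.eval ![x,y] (MvPolynomial.pderiv 0 q)
          + b * MvPolynomial.eval ![x,y] (MvPolynomial.pderiv 1 q)), ?_⟩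
        simp only [MvPolynomial.pderiv_mul, MvPolynomial.pderiv_X, map_add, map_mul,
          MvPolynomial.eval_mul, MvPolynomial.eval_add, MvPolynomial.eval_X, Pi.single,
          Function.update, Matrix.cons_val_zero, Matrix.cons_val_one, Matrix.head_cons]
        simp
        linear_combination (y + b*p) * ht

theorem stmt_0 (p : ℕ) (hp : p.Prime) (f : MvPolynomial (Fin 2) ℤ)
    (hconst : MvPolynomial.coeff 0 f ≠ 0) (x y : ℤ)
    (hdvd : (p : ℤ) ∣ MvPolynomial.eval ![x, y] f)
    (hfx : ¬ (p : ℤ) ∣ MvPolynomial.eval ![x, y] (MvPolynomial.pderiv 0 f)) :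
    ((Finset.range p ×ˢ Finset.range p).filter (fun kl : ℕ × ℕ =>
        (p : ℤ) ∣ MvPolynomial.eval ![x + (kl.1 : ℤ) * p, y + (kl.2 : ℤ) * p] f ∧
        ¬ ((p : ℤ) ^ 2 ∣ MvPolynomial.eval ![x + (kl.1 : ℤ) * p, y + (kl.2 : ℤ) * p] f))).card
      = p * (p - 1) := by
  classical
  haveI : Fact p.Prime := ⟨hp⟩
  obtain ⟨c, hc⟩ := hdvd
  set fx := MvPolynomial.eval ![x, y] (MvPolynomial.pderiv 0 f) with hfxdef
  set fy := MvPolynomial.eval ![x, y] (MvPolynomial.pderiv 1 f) with hfydef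
  have hp0 : (p : ℤ) ≠ 0 := by exact_mod_cast hp.ne_zero
  -- rewrite the filter condition
  have key : ∀ kl : ℕ × ℕ,
      (((p : ℤ) ∣ MvPolynomial.eval ![x + (kl.1 : ℤ) * p, y + (kl.2 : ℤ) * p] f ∧
        ¬ ((p : ℤ) ^ 2 ∣ MvPolynomial.eval ![x + (kl.1 : ℤ) * p, y + (kl.2 : ℤ) * p] f)))
      ↔ ¬ ((p : ℤ) ∣ (c + kl.1 * fx + kl.2 * fy)) := by
    rintro ⟨k, l⟩
    obtain ⟨t, ht⟩ := taylor2 (p : ℤ) x y k l f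
    have hval : MvPolynomial.eval ![x + (k : ℤ) * p, y + (l : ℤ) * p] f
        = (p : ℤ) * (c + k * fx + l * fy) + p^2 * t := by
      rw [ht, hc]; ring
    constructor
    · rintro ⟨-, h2⟩ hdvd2
      exact h2 (by rw [hval]; obtain ⟨s, hs⟩ := hdvd2
                   exact ⟨s + t, by rw [hs]; ring⟩)
    · intro hnd
      refine ⟨⟨c + k * fx + l * fy + p * t, by rw [hval]; ring⟩, fun h2 => hnd ?_⟩
      have : (p:ℤ)^2 ∣ (p : ℤ) * (c + k * fx + l * fy) := by
        have := h2; rw [hval] at this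
        exact (Int.dvd_add_right ⟨t, rfl⟩).mp (by rwa [add_comm] at this)
      obtain ⟨s, hs⟩ := this
      exact ⟨s, by apply mul_left_cancel₀ hp0; rw [hs]; ring⟩
  rw [Finset.filter_congr (fun kl _ => key kl)]
  have hfx0 : ((fx : ℤ) : ZMod p) ≠ 0 := fun h =>
    hfx ((ZMod.intCast_zmod_eq_zero_iff_dvd fx p).mp h)
  -- count the complement
  have hQ : ((Finset.range p ×ˢ Finset.range p).filter
      (fun kl : ℕ × ℕ => (p : ℤ) ∣ (c + kl.1 * fx + kl.2 * fy))).card = p := by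
    refine Eq.trans ?_ (Finset.card_range p)
    refine Finset.card_bij' (fun kl _ => kl.2)
      (fun l _ => (((((-(c + l * fy) : ℤ)) : ZMod p) * (((fx : ℤ) : ZMod p))⁻¹).val, l))
      ?_ ?_ ?_ ?_
    · rintro ⟨k, l⟩ h
      simp only [Finset.mem_filter, Finset.mem_product, Finset.mem_range] at h
      exact Finset.mem_range.mpr h.1.2
    · intro l hl
      rw [Finset.mem_range] at hl
      rw [Finset.mem_filter, Finset.mem_product]
      refine ⟨⟨Finset.mem_range.mpr (ZMod.val_lt _), Finset.mem_range.mpr hl⟩, ?_⟩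
      rw [← ZMod.intCast_zmod_eq_zero_iff_dvd]
      push_cast
      rw [ZMod.natCast_val]
      simp only [ZMod.cast_id', id_eq]
      field_simp
      ring
    · rintro ⟨k, l⟩ h
      simp only [Finset.mem_filter, Finset.mem_product, Finset.mem_range] at h
      obtain ⟨⟨hk, hl⟩, hdv⟩ := h
      have hz : ((c + k * fx + l * fy : ℤ) : ZMod p) = 0 :=
        (ZMod.intCast_zmod_eq_zero_iff_dvd _ p).mpr hdv
      push_cast at hz
      have hkval : (((-(c + l * fy) : ℤ)) : ZMod p) * (((fx : ℤ) : ZMod p))⁻¹ = (k : ZMod p) := by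
        push_cast
        field_simp
        linear_combination -hz
      simp only [Prod.mk.injEq]
      exact ⟨by rw [hkval, ZMod.val_cast_of_lt hk], trivial⟩
    · intro l hl; rfl
  have htot := Finset.card_filter_add_card_filter_not
    (s := Finset.range p ×ˢ Finset.range p)
    (p := fun kl : ℕ × ℕ => (p : ℤ) ∣ (c + kl.1 * fx + kl.2 * fy))
  rw [Finset.card_product, Finset.card_range] at htot
  have h2 : ((Finset.range p ×ˢ Finset.range p).filter
      (fun kl : ℕ × ℕ => ¬ (p : ℤ) ∣ (c + kl.1 * fx + kl.2 * fy))).card = p * p - p := by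
    omega
  rw [h2, Nat.mul_sub_one]
end

section
/- Let p be a prime, f ∈ ℤ[x,y] a polynomial with integer coefficients and nonzero constant term, and (r₁,s₁), (r₂,s₂) integer points with p ∣ f(r₁,s₁) and p ∣ f(r₂,s₂). Assume f_x(r₁,s₁)·f_y(r₂,s₂) − f_y(r₁,s₁)·f_x(r₂,s₂) ≢ 0 (mod p). Then the number of pairs (k,l) ∈ {0,1,…,p−1}² such that both f(r₁+kp, s₁+lp) and f(r₂+kp, s₂+lp) are divisible by p but not by p² equals (p−1)². -/
open MvPolynomial

lemma taylor2_s3 (p : ℕ) (f : MvPolynomial (Fin 2) ℤ) (r s k l : ℤ) :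
    (p:ℤ)^2 ∣ MvPolynomial.eval ![r + k*p, s + l*p] f -
      (MvPolynomial.eval ![r,s] f + k*p * MvPolynomial.eval ![r,s] (pderiv 0 f)
        + l*p * MvPolynomial.eval ![r,s] (pderiv 1 f)) := by
  induction f using MvPolynomial.induction_on with
  | C a => simp
  | add f g hf hg =>
      obtain ⟨M, hM⟩ := hf; obtain ⟨N, hN⟩ := hg
      exact ⟨M + N, by simp only [map_add]; linear_combination hM + hN⟩
  | mul_X f i hf =>
      obtain ⟨M, hM⟩ := hf
      fin_cases i <;>
        simp [pderiv_mul, pderiv_X, Pi.single_apply, Fin.ext_iff] at *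
      · exact ⟨M*(r+k*p) + k*k*(eval ![r,s] (pderiv 0 f)) + k*l*(eval ![r,s] (pderiv 1 f)),
          by linear_combination (r+k*p)*hM⟩
      · exact ⟨M*(s+l*p) + l*k*(eval ![r,s] (pderiv 0 f)) + l*l*(eval ![r,s] (pderiv 1 f)),
          by linear_combination (s+l*p)*hM⟩

def affEquiv (p : ℕ) [Fact p.Prime] (a₁ b₁ c₁ a₂ b₂ c₂ : ZMod p)
    (hdet : a₁*b₂ - b₁*a₂ ≠ 0) : (ZMod p × ZMod p) ≃ (ZMod p × ZMod p) where
  toFun := fun kl => (c₁ + kl.1*a₁ + kl.2*b₁, c₂ + kl.1*a₂ + kl.2*b₂)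
  invFun := fun uv => ((b₂*(uv.1-c₁) - b₁*(uv.2-c₂))/(a₁*b₂ - b₁*a₂),
    (a₁*(uv.2-c₂) - a₂*(uv.1-c₁))/(a₁*b₂ - b₁*a₂))
  left_inv := fun kl => by
    ext <;> simp only
    · linear_combination kl.1 * mul_inv_cancel₀ hdet
    · linear_combination kl.2 * mul_inv_cancel₀ hdet
  right_inv := fun uv => by
    ext <;> simp only
    · linear_combination (uv.1 - c₁) * mul_inv_cancel₀ hdet
    · linear_combination (uv.2 - c₂) * mul_inv_cancel₀ hdet

lemma count_aff (p : ℕ) [Fact p.Prime] (a₁ b₁ c₁ a₂ b₂ c₂ : ZMod p)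
    (hdet : a₁*b₂ - b₁*a₂ ≠ 0) :
    (Finset.univ.filter (fun kl : ZMod p × ZMod p =>
      c₁ + kl.1*a₁ + kl.2*b₁ ≠ 0 ∧ c₂ + kl.1*a₂ + kl.2*b₂ ≠ 0)).card = (p-1)^2 := by
  have h1 : Finset.univ.filter (fun kl : ZMod p × ZMod p =>
      c₁ + kl.1*a₁ + kl.2*b₁ ≠ 0 ∧ c₂ + kl.1*a₂ + kl.2*b₂ ≠ 0)
      = (Finset.univ.filter (fun uv : ZMod p × ZMod p => uv.1 ≠ 0 ∧ uv.2 ≠ 0)).map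
          (affEquiv p a₁ b₁ c₁ a₂ b₂ c₂ hdet).symm.toEmbedding := by
    ext kl
    rw [Finset.mem_map_equiv]
    simp [affEquiv]
  rw [h1, Finset.card_map]
  have h2 : (Finset.univ.filter (fun uv : ZMod p × ZMod p => uv.1 ≠ 0 ∧ uv.2 ≠ 0))
      = (Finset.univ.filter (fun u : ZMod p => u ≠ 0)) ×ˢ
        (Finset.univ.filter (fun u : ZMod p => u ≠ 0)) := by
    ext uv; simp [Finset.mem_product]
  rw [h2, Finset.card_product]
  have h3 : (Finset.univ.filter (fun u : ZMod p => u ≠ 0)).card = p - 1 := by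
    rw [Finset.filter_ne', Finset.card_erase_of_mem (Finset.mem_univ _)]
    simp [ZMod.card]
  rw [h3]; ring

theorem stmt_3 (p : ℕ) (hp : p.Prime) (f : MvPolynomial (Fin 2) ℤ)
    (hconst : MvPolynomial.coeff 0 f ≠ 0) (r₁ s₁ r₂ s₂ : ℤ)
    (h₁ : (p : ℤ) ∣ MvPolynomial.eval ![r₁, s₁] f)
    (h₂ : (p : ℤ) ∣ MvPolynomial.eval ![r₂, s₂] f)
    (hdet : ¬ (p : ℤ) ∣
      (MvPolynomial.eval ![r₁, s₁] (MvPolynomial.pderiv 0 f) *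
        MvPolynomial.eval ![r₂, s₂] (MvPolynomial.pderiv 1 f) -
       MvPolynomial.eval ![r₁, s₁] (MvPolynomial.pderiv 1 f) *
        MvPolynomial.eval ![r₂, s₂] (MvPolynomial.pderiv 0 f))) :
    ((Finset.range p ×ˢ Finset.range p).filter (fun kl : ℕ × ℕ =>
        ((p : ℤ) ∣ MvPolynomial.eval ![r₁ + (kl.1 : ℤ) * p, s₁ + (kl.2 : ℤ) * p] f ∧
          ¬ ((p : ℤ) ^ 2 ∣ MvPolynomial.eval ![r₁ + (kl.1 : ℤ) * p, s₁ + (kl.2 : ℤ) * p] f)) ∧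
        ((p : ℤ) ∣ MvPolynomial.eval ![r₂ + (kl.1 : ℤ) * p, s₂ + (kl.2 : ℤ) * p] f ∧
          ¬ ((p : ℤ) ^ 2 ∣ MvPolynomial.eval ![r₂ + (kl.1 : ℤ) * p, s₂ + (kl.2 : ℤ) * p] f)))).card
      = (p - 1) ^ 2 := by
  haveI : Fact p.Prime := ⟨hp⟩
  have hp0 : (p : ℤ) ≠ 0 := by exact_mod_cast hp.ne_zero
  obtain ⟨c₁, hc₁⟩ := h₁
  obtain ⟨c₂, hc₂⟩ := h₂
  -- integer quantities
  set a₁ := MvPolynomial.eval ![r₁, s₁] (MvPolynomial.pderiv 0 f) with ha₁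
  set b₁ := MvPolynomial.eval ![r₁, s₁] (MvPolynomial.pderiv 1 f) with hb₁
  set a₂ := MvPolynomial.eval ![r₂, s₂] (MvPolynomial.pderiv 0 f) with ha₂
  set b₂ := MvPolynomial.eval ![r₂, s₂] (MvPolynomial.pderiv 1 f) with hb₂
  -- key pointwise equivalence
  have key : ∀ (r s c a b : ℤ), MvPolynomial.eval ![r, s] f = p * c →
      MvPolynomial.eval ![r, s] (MvPolynomial.pderiv 0 f) = a →
      MvPolynomial.eval ![r, s] (MvPolynomial.pderiv 1 f) = b →
      ∀ k l : ℕ,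
      (((p : ℤ) ∣ MvPolynomial.eval ![r + (k : ℤ) * p, s + (l : ℤ) * p] f ∧
          ¬ ((p : ℤ) ^ 2 ∣ MvPolynomial.eval ![r + (k : ℤ) * p, s + (l : ℤ) * p] f)) ↔
        ¬ ((p:ℤ) ∣ c + (k:ℤ) * a + (l:ℤ) * b)) := by
    intro r s c a b hc ha hb k l
    obtain ⟨M, hM⟩ := taylor2_s3 p f r s (k:ℤ) (l:ℤ)
    rw [ha, hb, hc] at hM
    have heval : MvPolynomial.eval ![r + (k : ℤ) * p, s + (l : ℤ) * p] f
        = p * (c + (k:ℤ) * a + (l:ℤ) * b) + p^2 * M := by linear_combination hM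
    constructor
    · rintro ⟨-, hnd⟩ hdvd
      apply hnd
      obtain ⟨t, ht⟩ := hdvd
      exact ⟨t + M, by rw [heval, ht]; ring⟩
    · intro hnd
      constructor
      · exact ⟨c + (k:ℤ) * a + (l:ℤ) * b + p * M, by rw [heval]; ring⟩
      · intro hdvd
        apply hnd
        obtain ⟨t, ht⟩ := hdvd
        have h2 : (p:ℤ) * (c + (k:ℤ) * a + (l:ℤ) * b) = (p:ℤ) * ((p:ℤ) * (t - M)) := by
          linear_combination ht - heval
        exact ⟨t - M, mul_left_cancel₀ hp0 h2⟩
  have key₁ := key r₁ s₁ c₁ a₁ b₁ hc₁ rfl rfl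
  have key₂ := key r₂ s₂ c₂ a₂ b₂ hc₂ rfl rfl
  -- ZMod versions
  have hdetZ : ((a₁ : ZMod p) * (b₂ : ZMod p) - (b₁ : ZMod p) * (a₂ : ZMod p)) ≠ 0 := by
    intro h
    apply hdet
    rw [← ZMod.intCast_zmod_eq_zero_iff_dvd]
    push_cast
    exact h
  -- transfer the count to ZMod
  rw [← count_aff p (a₁ : ZMod p) (b₁ : ZMod p) (c₁ : ZMod p)
    (a₂ : ZMod p) (b₂ : ZMod p) (c₂ : ZMod p) hdetZ]
  apply Finset.card_bij' (fun kl _ => (((kl.1 : ℕ) : ZMod p), ((kl.2 : ℕ) : ZMod p)))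
    (fun uv _ => ((uv.1.val : ℕ), (uv.2.val : ℕ)))
  · rintro ⟨k, l⟩ hkl
    rw [Finset.mem_filter, Finset.mem_product, Finset.mem_range, Finset.mem_range] at hkl
    obtain ⟨⟨hk, hl⟩, hcond⟩ := hkl
    rw [Finset.mem_filter]
    refine ⟨Finset.mem_univ _, ?_, ?_⟩
    · have := (key₁ k l).mp hcond.1
      rw [← ZMod.intCast_zmod_eq_zero_iff_dvd] at this
      push_cast at this ⊢
      convert this using 2 <;> ring
    · have := (key₂ k l).mp hcond.2
      rw [← ZMod.intCast_zmod_eq_zero_iff_dvd] at this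
      push_cast at this ⊢
      convert this using 2 <;> ring
  · rintro ⟨u, v⟩ huv
    rw [Finset.mem_filter] at huv
    obtain ⟨-, hu, hv⟩ := huv
    rw [Finset.mem_filter, Finset.mem_product, Finset.mem_range, Finset.mem_range]
    refine ⟨⟨ZMod.val_lt u, ZMod.val_lt v⟩, ?_, ?_⟩
    · rw [key₁, ← ZMod.intCast_zmod_eq_zero_iff_dvd]
      intro h
      apply hu
      rw [← h]
      push_cast [ZMod.natCast_val, ZMod.cast_id]
      ring
    · rw [key₂, ← ZMod.intCast_zmod_eq_zero_iff_dvd]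
      intro h
      apply hv
      rw [← h]
      push_cast [ZMod.natCast_val, ZMod.cast_id]
      ring
  · rintro ⟨k, l⟩ hkl
    rw [Finset.mem_filter, Finset.mem_product, Finset.mem_range, Finset.mem_range] at hkl
    obtain ⟨⟨hk, hl⟩, -⟩ := hkl
    simp [ZMod.val_natCast_of_lt hk, ZMod.val_natCast_of_lt hl]
  · rintro ⟨u, v⟩ huv
    simp [ZMod.natCast_val, ZMod.cast_id]
end

section
/- Let p be a prime, f ∈ ℤ[x,y] a polynomial with integer coefficients and nonzero constant term, and (r₁,s₁), (r₂,s₂) integer points with p ∣ f(r₁,s₁), p ∣ f(r₂,s₂), and f_x(r₁,s₁)·f_y(r₂,s₂) − f_y(r₁,s₁)·f_x(r₂,s₂) ≢ 0 (mod p). Equip Ω = {0,1,…,p−1}² with the uniform probability measure, and for i = 1,2 define the random variable Y_i : Ω → {0,1} by Y_i(k,l) = 1 if p² ∣ f(r_i+kp, s_i+lp) and Y_i(k,l) = 0 otherwise. Then Y₁ and Y₂ are independent random variables. -/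
open scoped ENNReal

open MvPolynomial in
lemma taylor2_aux (p : ℤ) (f : MvPolynomial (Fin 2) ℤ) (r s k l : ℤ) :
    p ^ 2 ∣ eval ![r + k * p, s + l * p] f -
      (eval ![r, s] f +
        p * (k * eval ![r, s] (pderiv 0 f) + l * eval ![r, s] (pderiv 1 f))) := by
  induction f using MvPolynomial.induction_on with
  | C a => simp
  | add f g hf hg =>
      obtain ⟨m, hm⟩ := hf; obtain ⟨n, hn⟩ := hg
      exact ⟨m + n, by simp only [map_add]; linear_combination hm + hn⟩
  | mul_X f n hf =>
      obtain ⟨m, hm⟩ := hf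
      fin_cases n
      · refine ⟨k * (k * eval ![r, s] (pderiv 0 f) + l * eval ![r, s] (pderiv 1 f))
          + m * (r + k * p), ?_⟩
        simp only [eval_mul, eval_X, pderiv_mul, pderiv_X, map_add, Fin.mk_zero, Fin.mk_one,
          Pi.single_apply, Fin.reduceEq, if_true, if_false, reduceIte, Pi.single_eq_same,
          Pi.single_eq_of_ne, Matrix.cons_val_zero, Matrix.cons_val_one, Matrix.head_cons,
          map_one, map_zero, mul_one, mul_zero, Derivation.leibniz, smul_eq_mul]
        linear_combination (r + k * p) * hm
      · refine ⟨l * (k * eval ![r, s] (pderiv 0 f) + l * eval ![r, s] (pderiv 1 f))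
          + m * (s + l * p), ?_⟩
        simp only [eval_mul, eval_X, pderiv_mul, pderiv_X, map_add, Fin.mk_zero, Fin.mk_one,
          Pi.single_apply, Fin.reduceEq, if_true, if_false, reduceIte, Pi.single_eq_same,
          Pi.single_eq_of_ne, Matrix.cons_val_zero, Matrix.cons_val_one, Matrix.head_cons,
          map_one, map_zero, mul_one, mul_zero, Derivation.leibniz, smul_eq_mul]
        linear_combination (s + l * p) * hm

theorem stmt_9 (p : ℕ) (hp : p.Prime) (f : MvPolynomial (Fin 2) ℤ)
    (hconst : MvPolynomial.coeff 0 f ≠ 0) (r₁ s₁ r₂ s₂ : ℤ)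
    (h₁ : (p : ℤ) ∣ MvPolynomial.eval ![r₁, s₁] f)
    (h₂ : (p : ℤ) ∣ MvPolynomial.eval ![r₂, s₂] f)
    (hdet : ¬ (p : ℤ) ∣
      (MvPolynomial.eval ![r₁, s₁] (MvPolynomial.pderiv 0 f) *
        MvPolynomial.eval ![r₂, s₂] (MvPolynomial.pderiv 1 f) -
       MvPolynomial.eval ![r₁, s₁] (MvPolynomial.pderiv 1 f) *
        MvPolynomial.eval ![r₂, s₂] (MvPolynomial.pderiv 0 f))) :
    ProbabilityTheory.IndepFun
      (fun kl : Fin p × Fin p =>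
        if (p : ℤ) ^ 2 ∣ MvPolynomial.eval ![r₁ + ((kl.1 : ℕ) : ℤ) * p, s₁ + ((kl.2 : ℕ) : ℤ) * p] f
        then (1 : ℝ) else 0)
      (fun kl : Fin p × Fin p =>
        if (p : ℤ) ^ 2 ∣ MvPolynomial.eval ![r₂ + ((kl.1 : ℕ) : ℤ) * p, s₂ + ((kl.2 : ℕ) : ℤ) * p] f
        then (1 : ℝ) else 0)
      (((p : ℝ≥0∞) ^ 2)⁻¹ • MeasureTheory.Measure.count) := by
  classical
  haveI : NeZero p := ⟨hp.pos.ne'⟩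
  haveI : Fact p.Prime := ⟨hp⟩
  set μ : MeasureTheory.Measure (Fin p × Fin p) :=
    ((p : ℝ≥0∞) ^ 2)⁻¹ • MeasureTheory.Measure.count with hμ
  obtain ⟨m₁, hm₁⟩ := h₁
  obtain ⟨m₂, hm₂⟩ := h₂
  set A₁ : ℤ := MvPolynomial.eval ![r₁, s₁] (MvPolynomial.pderiv 0 f) with hA₁
  set B₁ : ℤ := MvPolynomial.eval ![r₁, s₁] (MvPolynomial.pderiv 1 f) with hB₁
  set A₂ : ℤ := MvPolynomial.eval ![r₂, s₂] (MvPolynomial.pderiv 0 f) with hA₂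
  set B₂ : ℤ := MvPolynomial.eval ![r₂, s₂] (MvPolynomial.pderiv 1 f) with hB₂
  -- the affine map into (ZMod p)²
  set ψ : Fin p × Fin p → ZMod p × ZMod p := fun kl =>
    (((m₁ : ZMod p) + (kl.1 : ℕ) * (A₁ : ZMod p) + (kl.2 : ℕ) * (B₁ : ZMod p)),
     ((m₂ : ZMod p) + (kl.1 : ℕ) * (A₂ : ZMod p) + (kl.2 : ℕ) * (B₂ : ZMod p))) with hψ
  -- membership characterization
  have key : ∀ (rr ss m A B : ℤ),
      MvPolynomial.eval ![rr, ss] f = (p : ℤ) * m →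
      A = MvPolynomial.eval ![rr, ss] (MvPolynomial.pderiv 0 f) →
      B = MvPolynomial.eval ![rr, ss] (MvPolynomial.pderiv 1 f) →
      ∀ kl : Fin p × Fin p,
      ((p : ℤ) ^ 2 ∣
        MvPolynomial.eval ![rr + ((kl.1 : ℕ) : ℤ) * p, ss + ((kl.2 : ℕ) : ℤ) * p] f ↔
        (m : ZMod p) + (kl.1 : ℕ) * (A : ZMod p) + (kl.2 : ℕ) * (B : ZMod p) = 0) := by
    intro rr ss m A B hm hA hB kl
    obtain ⟨t, ht⟩ := taylor2_aux (p : ℤ) f rr ss ((kl.1 : ℕ) : ℤ) ((kl.2 : ℕ) : ℤ)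
    have heval : MvPolynomial.eval ![rr + ((kl.1 : ℕ) : ℤ) * p, ss + ((kl.2 : ℕ) : ℤ) * p] f =
        (p : ℤ) * (m + ((kl.1 : ℕ) : ℤ) * A + ((kl.2 : ℕ) : ℤ) * B) + (p : ℤ) ^ 2 * t := by
      rw [← hA, ← hB] at ht
      linear_combination ht + hm
    rw [heval]
    have hp0 : (p : ℤ) ≠ 0 := by exact_mod_cast hp.pos.ne'
    constructor
    · intro h
      have h' : (p : ℤ) ^ 2 ∣ (p : ℤ) * (m + ((kl.1 : ℕ) : ℤ) * A + ((kl.2 : ℕ) : ℤ) * B) :=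
        (dvd_add_right (Dvd.intro t rfl)).mp (by rwa [add_comm] at h)
      rw [pow_two] at h'
      have := (mul_dvd_mul_iff_left hp0).mp h'
      have := (ZMod.intCast_zmod_eq_zero_iff_dvd _ p).mpr this
      push_cast at this
      convert this using 2 <;> push_cast <;> ring
    · intro h
      have : (p : ℤ) ∣ (m + ((kl.1 : ℕ) : ℤ) * A + ((kl.2 : ℕ) : ℤ) * B) := by
        rw [← ZMod.intCast_zmod_eq_zero_iff_dvd]
        push_cast
        convert h using 2 <;> push_cast <;> ring
      obtain ⟨u, hu⟩ := this
      exact ⟨u + t, by rw [hu]; ring⟩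
  have key₁ := key r₁ s₁ m₁ A₁ B₁ hm₁ hA₁ hB₁
  have key₂ := key r₂ s₂ m₂ A₂ B₂ hm₂ hA₂ hB₂
  -- ψ is bijective
  have hdet' : ((A₁ : ZMod p) * (B₂ : ZMod p) - (B₁ : ZMod p) * (A₂ : ZMod p)) ≠ 0 := by
    intro h
    apply hdet
    rw [← ZMod.intCast_zmod_eq_zero_iff_dvd]
    push_cast
    linear_combination h
  have hinj : Function.Injective ψ := by
    intro x y hxy
    have h1 : (m₁ : ZMod p) + (x.1 : ℕ) * (A₁ : ZMod p) + (x.2 : ℕ) * (B₁ : ZMod p) =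
        (m₁ : ZMod p) + (y.1 : ℕ) * (A₁ : ZMod p) + (y.2 : ℕ) * (B₁ : ZMod p) :=
      congrArg Prod.fst hxy
    have h2 : (m₂ : ZMod p) + (x.1 : ℕ) * (A₂ : ZMod p) + (x.2 : ℕ) * (B₂ : ZMod p) =
        (m₂ : ZMod p) + (y.1 : ℕ) * (A₂ : ZMod p) + (y.2 : ℕ) * (B₂ : ZMod p) :=
      congrArg Prod.snd hxy
    have hu : (((x.1 : ℕ) : ZMod p) - ((y.1 : ℕ) : ZMod p)) = 0 := by
      have : ((A₁ : ZMod p) * (B₂ : ZMod p) - (B₁ : ZMod p) * (A₂ : ZMod p)) *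
          (((x.1 : ℕ) : ZMod p) - ((y.1 : ℕ) : ZMod p)) = 0 := by
        linear_combination (B₂ : ZMod p) * h1 - (B₁ : ZMod p) * h2
      rcases mul_eq_zero.mp this with h | h
      · exact absurd h hdet'
      · exact h
    have hv : (((x.2 : ℕ) : ZMod p) - ((y.2 : ℕ) : ZMod p)) = 0 := by
      have : ((A₁ : ZMod p) * (B₂ : ZMod p) - (B₁ : ZMod p) * (A₂ : ZMod p)) *
          (((x.2 : ℕ) : ZMod p) - ((y.2 : ℕ) : ZMod p)) = 0 := by
        linear_combination (A₁ : ZMod p) * h2 - (A₂ : ZMod p) * h1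
      rcases mul_eq_zero.mp this with h | h
      · exact absurd h hdet'
      · exact h
    have e1 : ((x.1 : ℕ) : ZMod p) = ((y.1 : ℕ) : ZMod p) := sub_eq_zero.mp hu
    have e2 : ((x.2 : ℕ) : ZMod p) = ((y.2 : ℕ) : ZMod p) := sub_eq_zero.mp hv
    have v1 : (x.1 : ℕ) = (y.1 : ℕ) := by
      have := congrArg ZMod.val e1
      rwa [ZMod.val_cast_of_lt x.1.isLt, ZMod.val_cast_of_lt y.1.isLt] at this
    have v2 : (x.2 : ℕ) = (y.2 : ℕ) := by
      have := congrArg ZMod.val e2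
      rwa [ZMod.val_cast_of_lt x.2.isLt, ZMod.val_cast_of_lt y.2.isLt] at this
    exact Prod.ext (Fin.ext v1) (Fin.ext v2)
  have hbij : Function.Bijective ψ :=
    (Fintype.bijective_iff_injective_and_card ψ).mpr
      ⟨hinj, by simp [ZMod.card]⟩
  set e : (Fin p × Fin p) ≃ (ZMod p × ZMod p) := Equiv.ofBijective ψ hbij with he
  -- measure of preimages
  have hncard : ∀ A : Set (ZMod p × ZMod p), (ψ ⁻¹' A).ncard = A.ncard := by
    intro A
    have : ψ ⁻¹' A = e.symm '' A := by
      rw [Equiv.image_eq_preimage_symm]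
      rfl
    rw [this, Set.ncard_image_of_injective A e.symm.injective]
  have hcount : ∀ A : Set (ZMod p × ZMod p),
      μ (ψ ⁻¹' A) = ((A.ncard : ℝ≥0∞)) * ((p : ℝ≥0∞) ^ 2)⁻¹ := by
    intro A
    rw [hμ, MeasureTheory.Measure.smul_apply, smul_eq_mul,
      MeasureTheory.Measure.count_apply_finite _ (Set.toFinite _)]
    rw [← Set.ncard_eq_toFinset_card (ψ ⁻¹' A) (Set.toFinite _), hncard A]
    ring
  have hp0 : (p : ℝ≥0∞) ≠ 0 := Nat.cast_ne_zero.mpr hp.pos.ne'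
  have hpt : (p : ℝ≥0∞) ≠ ⊤ := ENNReal.natCast_ne_top p
  -- ncard facts
  have hprod : ∀ (s t : Set (ZMod p)), (s ×ˢ t).ncard = s.ncard * t.ncard := by
    intro s t
    rw [← Nat.card_coe_set_eq, ← Nat.card_coe_set_eq, ← Nat.card_coe_set_eq,
      ← Nat.card_prod]
    exact Nat.card_congr (Equiv.Set.prod s t)
  have huniv : (Set.univ : Set (ZMod p)).ncard = p := by
    rw [Set.ncard_univ, Nat.card_eq_fintype_card, ZMod.card]
  -- independence of the two coordinates of ψ
  letI : MeasurableSpace (ZMod p) := ⊤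
  have hcomp : ProbabilityTheory.IndepFun (fun ω => (ψ ω).1) (fun ω => (ψ ω).2) μ := by
    rw [ProbabilityTheory.indepFun_iff_measure_inter_preimage_eq_mul]
    intro s t _ _
    have e1 : (fun ω => (ψ ω).1) ⁻¹' s = ψ ⁻¹' (s ×ˢ (Set.univ : Set (ZMod p))) := by
      ext ω; simp
    have e2 : (fun ω => (ψ ω).2) ⁻¹' t = ψ ⁻¹' ((Set.univ : Set (ZMod p)) ×ˢ t) := by
      ext ω; simp
    have e3 : (fun ω => (ψ ω).1) ⁻¹' s ∩ (fun ω => (ψ ω).2) ⁻¹' t = ψ ⁻¹' (s ×ˢ t) := by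
      ext ω; simp
    rw [e3, e1, e2, hcount, hcount, hcount, hprod, hprod, huniv, hprod, huniv]
    push_cast
    rw [pow_two]
    rw [ENNReal.mul_inv (Or.inl hp0) (Or.inl hpt)]
    have hc : (p : ℝ≥0∞) * (p : ℝ≥0∞)⁻¹ = 1 := ENNReal.mul_inv_cancel hp0 hpt
    calc (s.ncard : ℝ≥0∞) * (t.ncard : ℝ≥0∞) * ((p : ℝ≥0∞)⁻¹ * (p : ℝ≥0∞)⁻¹)
        = ((s.ncard : ℝ≥0∞) * (t.ncard : ℝ≥0∞) * ((p : ℝ≥0∞)⁻¹ * (p : ℝ≥0∞)⁻¹)) * (1 * 1) := by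
          ring
      _ = ((s.ncard : ℝ≥0∞) * (t.ncard : ℝ≥0∞) * ((p : ℝ≥0∞)⁻¹ * (p : ℝ≥0∞)⁻¹)) *
            (((p : ℝ≥0∞) * (p : ℝ≥0∞)⁻¹) * ((p : ℝ≥0∞) * (p : ℝ≥0∞)⁻¹)) := by rw [hc]
      _ = (s.ncard : ℝ≥0∞) * (p : ℝ≥0∞) * ((p : ℝ≥0∞)⁻¹ * (p : ℝ≥0∞)⁻¹) *
            ((p : ℝ≥0∞) * (t.ncard : ℝ≥0∞) * ((p : ℝ≥0∞)⁻¹ * (p : ℝ≥0∞)⁻¹)) := by ring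
  -- conclude
  have hfun1 : (fun kl : Fin p × Fin p =>
      if (p : ℤ) ^ 2 ∣ MvPolynomial.eval
        ![r₁ + ((kl.1 : ℕ) : ℤ) * p, s₁ + ((kl.2 : ℕ) : ℤ) * p] f
      then (1 : ℝ) else 0) =
      (fun x : ZMod p => if x = 0 then (1 : ℝ) else 0) ∘ (fun ω => (ψ ω).1) := by
    funext kl
    simp only [Function.comp_apply, hψ]
    exact if_congr (key₁ kl) rfl rfl
  have hfun2 : (fun kl : Fin p × Fin p =>
      if (p : ℤ) ^ 2 ∣ MvPolynomial.eval
        ![r₂ + ((kl.1 : ℕ) : ℤ) * p, s₂ + ((kl.2 : ℕ) : ℤ) * p] f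
      then (1 : ℝ) else 0) =
      (fun x : ZMod p => if x = 0 then (1 : ℝ) else 0) ∘ (fun ω => (ψ ω).2) := by
    funext kl
    simp only [Function.comp_apply, hψ]
    exact if_congr (key₂ kl) rfl rfl
  rw [hfun1, hfun2]
  exact hcomp.comp measurable_from_top measurable_from_top
end

section
/- Let f ∈ ℤ[x,y] be a polynomial with integer coefficients. Assume: (i) for all sufficiently large primes p, every (x,y) ∈ C_p satisfies (f_x(x,y), f_y(x,y)) ≢ (0,0) (mod p); (ii) m(p)/p → 1 as p → ∞ along primes; (iii) for every k ≥ 2, m_{k,2}(p)/p² → 1 as p → ∞ along primes; (iv) for every k ≥ 2, m_{k,1}(p)/p → 0 as p → ∞ along primes. For each prime p and (k,l) ∈ {0,1,…,p−1}², let X_p(k,l) be the number of pairs (i,j) ∈ {0,1,…,p−1}² with p² ∣ f(kp+i, lp+j). Then for every k ≥ 1, the k-th moment of X_p with respect to the uniform measure on {0,…,p−1}², namely (1/p²)·Σ_{(k',l')} X_p(k',l')^k, converges to Σ_{i=1}^{k} S(k,i) (the k-th moment of the Poisson distribution with parameter 1) as p → ∞ along primes. -/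
open Matrix Filter

/-- Stirling numbers of the second kind: `stirling2 n k` is the number of
partitions of an `n`-element set into `k` nonempty blocks. -/
def stirling2 : ℕ → ℕ → ℕ
  | 0, 0 => 1
  | 0, _ + 1 => 0
  | _ + 1, 0 => 0
  | n + 1, k + 1 => (k + 1) * stirling2 n (k + 1) + stirling2 n k

/-- The points `(x,y) ∈ {0,…,p-1}²` with `p ∣ f(x,y)`. -/
noncomputable def curvePts (f : MvPolynomial (Fin 2) ℤ) (p : ℕ) : Finset (ℕ × ℕ) :=
  (Finset.range p ×ˢ Finset.range p).filter (fun xy : ℕ × ℕ =>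
    (p : ℤ) ∣ MvPolynomial.eval ![(xy.1 : ℤ), (xy.2 : ℤ)] f)

/-- The `k × 3` matrix over `ZMod p` associated to a `k`-tuple of points, with `t`-th row
`(f_x(r_t,s_t), f_y(r_t,s_t), f(r_t,s_t)/p) mod p`. -/
noncomputable def Bmat (f : MvPolynomial (Fin 2) ℤ) (p k : ℕ) (P : Fin k → ℕ × ℕ) :
    Matrix (Fin k) (Fin 3) (ZMod p) :=
  Matrix.of fun t =>
    ![((MvPolynomial.eval ![((P t).1 : ℤ), ((P t).2 : ℤ)] (MvPolynomial.pderiv 0 f) : ℤ) : ZMod p),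
      ((MvPolynomial.eval ![((P t).1 : ℤ), ((P t).2 : ℤ)] (MvPolynomial.pderiv 1 f) : ℤ) : ZMod p),
      ((MvPolynomial.eval ![((P t).1 : ℤ), ((P t).2 : ℤ)] f / (p : ℤ)) : ZMod p)]

/-- `k`-tuples of pairwise distinct points of `curvePts f p`. -/
noncomputable def tuples (f : MvPolynomial (Fin 2) ℤ) (p k : ℕ) : Finset (Fin k → ℕ × ℕ) :=
  (Fintype.piFinset fun _ : Fin k => curvePts f p).filter Function.Injective

open Classical in
/-- `m_{k,1}`: the number of `k`-tuples of pairwise distinct points whose associated matrix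
has rank `1`. -/
noncomputable def mk1 (f : MvPolynomial (Fin 2) ℤ) (p k : ℕ) : ℕ :=
  ((tuples f p k).filter (fun P => (Bmat f p k P).rank = 1)).card

open Classical in
/-- `m_{k,2}`: the number of `k`-tuples of pairwise distinct points whose associated matrix
has rank `2` with linearly independent first two columns. -/
noncomputable def mk2 (f : MvPolynomial (Fin 2) ℤ) (p k : ℕ) : ℕ :=
  ((tuples f p k).filter (fun P => (Bmat f p k P).rank = 2 ∧
    LinearIndependent (ZMod p) ![(Bmat f p k P)ᵀ 0, (Bmat f p k P)ᵀ 1])).card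

/-- `X_p(k,l)`: the number of `(i,j) ∈ {0,…,p-1}²` with `p² ∣ f(kp+i, lp+j)`. -/
noncomputable def Xrv (f : MvPolynomial (Fin 2) ℤ) (p : ℕ) (kl : ℕ × ℕ) : ℕ :=
  ((Finset.range p ×ˢ Finset.range p).filter (fun ij : ℕ × ℕ =>
    (p : ℤ) ^ 2 ∣
      MvPolynomial.eval ![(kl.1 : ℤ) * p + (ij.1 : ℤ), (kl.2 : ℤ) * p + (ij.2 : ℤ)] f)).card

/-- The filter of "`p → ∞` along primes": cofinite sets of primes. -/
def primesFilter : Filter ℕ := Filter.atTop ⊓ Filter.principal {p : ℕ | p.Prime}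


section Aux

open MvPolynomial Matrix Finset Submodule

lemma stirling2_eq_zero : ∀ n k : ℕ, n < k → stirling2 n k = 0
  | 0, _ + 1, _ => rfl
  | n + 1, k + 1, h => by
    have h1 : n < k + 1 := by omega
    have h2 : n < k := by omega
    simp [stirling2, stirling2_eq_zero n (k+1) h1, stirling2_eq_zero n k h2]

lemma mul_descFactorial (x i : ℕ) :
    x * Nat.descFactorial x i = Nat.descFactorial x (i + 1) + i * Nat.descFactorial x i := by
  rcases le_or_gt i x with h | h
  · rw [Nat.descFactorial_succ, Nat.sub_mul, ← Nat.sub_add_cancel (Nat.mul_le_mul_right _ h)]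
    ring_nf
    omega
  · rw [Nat.descFactorial_eq_zero_iff_lt.2 h, Nat.descFactorial_eq_zero_iff_lt.2 (by omega)]
    simp

lemma pow_eq_sum_stirling (n x : ℕ) :
    x ^ n = ∑ i ∈ Finset.range (n + 1), stirling2 n i * Nat.descFactorial x i := by
  induction n with
  | zero => simp [stirling2]
  | succ n ih =>
    have key : x ^ (n+1) = ∑ i ∈ Finset.range (n + 1),
        (stirling2 n i * Nat.descFactorial x (i+1) + stirling2 n i * (i * Nat.descFactorial x i)) := by
      rw [pow_succ, ih, Finset.sum_mul]
      refine Finset.sum_congr rfl fun i _ => ?_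
      rw [mul_comm _ x, mul_left_comm, mul_descFactorial]
      ring
    rw [key, Finset.sum_add_distrib]
    rw [Finset.sum_range_succ' (fun i => stirling2 (n+1) i * Nat.descFactorial x i) (n+1)]
    have h0 : stirling2 (n+1) 0 * Nat.descFactorial x 0 = 0 := by simp [stirling2]
    rw [h0, add_zero]
    have : ∀ i, stirling2 (n+1) (i+1) * Nat.descFactorial x (i+1)
        = stirling2 n (i+1) * ((i+1) * Nat.descFactorial x (i+1))
          + stirling2 n i * Nat.descFactorial x (i+1) := by
      intro i; show ((i+1) * stirling2 n (i+1) + stirling2 n i) * _ = _; ring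
    simp_rw [this]
    rw [Finset.sum_add_distrib]
    have hshift : ∑ i ∈ Finset.range (n+1), stirling2 n i * (i * Nat.descFactorial x i)
        = ∑ i ∈ Finset.range (n+1), stirling2 n (i+1) * ((i+1) * Nat.descFactorial x (i+1)) := by
      rw [Finset.sum_range_succ' (fun i => stirling2 n i * (i * Nat.descFactorial x i)) n]
      rw [Finset.sum_range_succ (fun i => stirling2 n (i+1) * ((i+1) * Nat.descFactorial x (i+1))) n]
      simp [stirling2_eq_zero n (n+1) (by omega)]
    rw [hshift, add_comm]

lemma taylor2_s18 (f : MvPolynomial (Fin 2) ℤ) (a b u v N : ℤ) :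
    N^2 ∣ eval ![a + N*u, b + N*v] f - eval ![a, b] f
      - N*u * eval ![a,b] (pderiv 0 f) - N*v * eval ![a,b] (pderiv 1 f) := by
  induction f using MvPolynomial.induction_on with
  | C c => simp
  | add p q hp hq =>
    obtain ⟨R, hR⟩ := hp; obtain ⟨S, hS⟩ := hq
    refine ⟨R + S, ?_⟩
    simp only [_root_.map_add]
    linear_combination hR + hS
  | mul_X p i hp =>
    obtain ⟨R, hR⟩ := hp
    have key0 : N^2 ∣ eval ![a + N*u, b + N*v] (p * X 0) - eval ![a, b] (p * X 0)
        - N*u * eval ![a,b] (pderiv 0 (p * X 0)) - N*v * eval ![a,b] (pderiv 1 (p * X 0)) := by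
      refine ⟨R*a + u^2*(eval ![a,b] (pderiv 0 p)) + u*v*(eval ![a,b] (pderiv 1 p)) + N*u*R, ?_⟩
      have h0 : (pderiv (0 : Fin 2)) (p * X 0) = (pderiv 0 p) * X 0 + p := by
        simp [pderiv_mul]; ring
      have h1 : (pderiv (1 : Fin 2)) (p * X 0) = (pderiv 1 p) * X 0 := by
        simp [pderiv_mul, pderiv_X_of_ne (by decide : (1 : Fin 2) ≠ 0)]; ring
      rw [h0, h1]
      simp only [_root_.map_add, _root_.map_mul, eval_X, Matrix.cons_val_zero]
      linear_combination (a + N*u) * hR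
    have key1 : N^2 ∣ eval ![a + N*u, b + N*v] (p * X 1) - eval ![a, b] (p * X 1)
        - N*u * eval ![a,b] (pderiv 0 (p * X 1)) - N*v * eval ![a,b] (pderiv 1 (p * X 1)) := by
      refine ⟨R*b + v^2*(eval ![a,b] (pderiv 1 p)) + u*v*(eval ![a,b] (pderiv 0 p)) + N*v*R, ?_⟩
      have h0 : (pderiv (0 : Fin 2)) (p * X 1) = (pderiv 0 p) * X 1 := by
        simp [pderiv_mul, pderiv_X_of_ne (by decide : (0 : Fin 2) ≠ 1)]; ring
      have h1 : (pderiv (1 : Fin 2)) (p * X 1) = (pderiv 1 p) * X 1 + p := by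
        simp [pderiv_mul]; ring
      rw [h0, h1]
      simp only [_root_.map_add, _root_.map_mul, eval_X, Matrix.cons_val_one, Matrix.head_cons, Matrix.cons_val_zero]
      linear_combination (b + N*v) * hR
    fin_cases i
    · exact key0
    · exact key1

lemma card_injective_tuples {α : Type*} [DecidableEq α] (s : Finset α) (i : ℕ) :
    ((Fintype.piFinset fun _ : Fin i => s).filter Function.Injective).card
      = s.card.descFactorial i := by
  classical
  have e : ((Fintype.piFinset fun _ : Fin i => s).filter Function.Injective) ≃ (Fin i ↪ s) := by
    refine
      { toFun := fun x => ⟨fun t => ⟨x.1 t, ?_⟩, fun t t' h => ?_⟩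
        invFun := fun g => ⟨fun t => (g t).1, ?_⟩
        left_inv := fun x => by ext; rfl
        right_inv := fun g => by ext; rfl }
    · have := x.2
      rw [Finset.mem_filter, Fintype.mem_piFinset] at this
      exact this.1 t
    · have := x.2
      rw [Finset.mem_filter] at this
      exact this.2 (congrArg Subtype.val h)
    · rw [Finset.mem_filter, Fintype.mem_piFinset]
      exact ⟨fun t => (g t).2, fun t t' h => g.injective (Subtype.ext h)⟩
  rw [Finset.card_eq_of_equiv_fintype e, Fintype.card_embedding_eq, Fintype.card_coe,
    Fintype.card_fin]

variable {K : Type*} [Field K] [Fintype K] [DecidableEq K]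

lemma card_line (a b c : K) (h : ¬(a = 0 ∧ b = 0)) :
    (Finset.univ.filter fun w : K × K => w.1 * a + w.2 * b + c = 0).card
      = Fintype.card K := by
  rw [← Finset.card_univ (α := K)]
  rcases eq_or_ne a 0 with ha | ha
  · have hb : b ≠ 0 := fun hb => h ⟨ha, hb⟩
    subst ha
    refine Finset.card_bij' (fun w _ => w.1) (fun k _ => (k, -c * b⁻¹)) ?_ ?_ ?_ ?_
    · intros; exact Finset.mem_univ _
    · intro k _
      simp only [Finset.mem_filter, Finset.mem_univ, true_and]
      field_simp
      ring
    · intro w hw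
      simp only [Finset.mem_filter, Finset.mem_univ, true_and, mul_zero, zero_add] at hw
      ext
      · rfl
      · field_simp
        linear_combination -hw
    · intro k _; rfl
  · refine Finset.card_bij' (fun w _ => w.2) (fun l _ => ((-c - l * b) * a⁻¹, l)) ?_ ?_ ?_ ?_
    · intros; exact Finset.mem_univ _
    · intro l _
      simp only [Finset.mem_filter, Finset.mem_univ, true_and]
      field_simp
      ring
    · intro w hw
      simp only [Finset.mem_filter, Finset.mem_univ, true_and] at hw
      ext
      · field_simp
        linear_combination -hw
      · rfl
    · intro l _; rfl

lemma finrank_span_single_le {V : Type*} [AddCommGroup V] [Module K V] (z : V) :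
    Module.finrank K (span K ({z} : Set V)) ≤ 1 := by
  rcases eq_or_ne z 0 with rfl | hz
  · rw [span_zero_singleton]; simp
  · rw [finrank_span_singleton hz]

lemma finrank_span_pair_le_one {V : Type*} [AddCommGroup V] [Module K V]
    [FiniteDimensional K V] {x y : V} (h : ¬ LinearIndependent K ![x, y]) :
    Module.finrank K (span K ({x, y} : Set V)) ≤ 1 := by
  rw [LinearIndependent.pair_iff] at h
  push_neg at h
  obtain ⟨s, t, hst, hne⟩ := h
  rcases eq_or_ne s 0 with rfl | hs
  · have ht : t ≠ 0 := fun h' => hne (by simp) h'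
    have hy : y = 0 := by
      have h2 : t • y = 0 := by simpa using hst
      simpa [ht] using h2
    have hle : span K ({x, y} : Set V) ≤ span K ({x} : Set V) := by
      rw [span_le]
      rintro z (rfl | rfl)
      · exact subset_span rfl
      · simp [hy]
    exact le_trans (Submodule.finrank_mono hle) (finrank_span_single_le x)
  · have hsx : s • x = -(t • y) := eq_neg_of_add_eq_zero_left hst
    have hx : x = (-(s⁻¹ * t)) • y := by
      have h2 := congrArg (s⁻¹ • ·) hsx
      simpa [smul_smul, inv_mul_cancel₀ hs, neg_smul, smul_neg] using h2
    have hle : span K ({x, y} : Set V) ≤ span K ({y} : Set V) := by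
      rw [span_le]
      rintro z (rfl | rfl)
      · rw [hx]
        exact smul_mem _ _ (subset_span rfl)
      · exact subset_span rfl
    exact le_trans (Submodule.finrank_mono hle) (finrank_span_single_le y)

lemma finrank_span_pair_eq_two {V : Type*} [AddCommGroup V] [Module K V]
    {x y : V} (h : LinearIndependent K ![x, y]) :
    Module.finrank K (span K ({x, y} : Set V)) = 2 := by
  have hr : Set.range ![x, y] = ({x, y} : Set V) := by
    ext z
    simp only [Set.mem_range, Fin.exists_fin_two, Matrix.cons_val_zero, Matrix.cons_val_one,
      Matrix.head_cons, Set.mem_insert_iff, Set.mem_singleton_iff]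
    tauto
  rw [← hr, finrank_span_eq_card h]
  simp

lemma card_sol_two {n : ℕ} (B : Matrix (Fin n) (Fin 3) K)
    (hrank : B.rank = 2) (hind : LinearIndependent K ![Bᵀ 0, Bᵀ 1]) :
    (univ.filter fun w : K × K => ∀ t, w.1 * B t 0 + w.2 * B t 1 + B t 2 = 0).card = 1 := by
  have hW2 := finrank_span_pair_eq_two hind
  have hle : span K ({Bᵀ 0, Bᵀ 1} : Set (Fin n → K)) ≤ span K (Set.range Bᵀ) := by
    apply span_mono
    rintro z (rfl | rfl)
    exacts [⟨0, rfl⟩, ⟨1, rfl⟩]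
  have hrk : Module.finrank K (span K (Set.range Bᵀ)) = 2 := by
    exact (Matrix.rank_eq_finrank_span_cols (A := B)).symm.trans hrank
  have heq := Submodule.eq_of_le_of_finrank_le hle (by rw [hrk, hW2])
  have hC : Bᵀ 2 ∈ span K ({Bᵀ 0, Bᵀ 1} : Set (Fin n → K)) := by
    rw [heq]; exact subset_span ⟨2, rfl⟩
  obtain ⟨s, t, hst⟩ := mem_span_pair.mp hC
  rw [Finset.card_eq_one]
  refine ⟨(-s, -t), ?_⟩
  ext w
  simp only [Finset.mem_filter, Finset.mem_univ, true_and, Finset.mem_singleton]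
  constructor
  · intro hw
    have hzero : (w.1 + s) • Bᵀ 0 + (w.2 + t) • Bᵀ 1 = 0 := by
      funext r
      have h1 := hw r
      have h2 := congrFun hst r
      simp only [Pi.add_apply, Pi.smul_apply, smul_eq_mul, Pi.zero_apply,
        transpose_apply] at h2 ⊢
      linear_combination h1 + h2
    obtain ⟨h1, h2⟩ := LinearIndependent.pair_iff.mp hind _ _ hzero
    exact Prod.ext (eq_neg_of_add_eq_zero_left h1) (eq_neg_of_add_eq_zero_left h2)
  · rintro rfl
    intro r
    have h2 := congrFun hst r
    simp only [Pi.add_apply, Pi.smul_apply, smul_eq_mul, transpose_apply] at h2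
    linear_combination -h2

lemma card_sol_other {n : ℕ} (hn : 0 < n) (B : Matrix (Fin n) (Fin 3) K)
    (hrow : ∀ t, ¬(B t 0 = 0 ∧ B t 1 = 0))
    (h1 : B.rank ≠ 1)
    (h2 : ¬(B.rank = 2 ∧ LinearIndependent K ![Bᵀ 0, Bᵀ 1])) :
    (univ.filter fun w : K × K => ∀ t, w.1 * B t 0 + w.2 * B t 1 + B t 2 = 0).card = 0 := by
  rw [Finset.card_eq_zero, Finset.eq_empty_iff_forall_notMem]
  intro w hw
  rw [Finset.mem_filter] at hw
  replace hw := hw.2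
  have hC : Bᵀ 2 = (-w.1) • Bᵀ 0 + (-w.2) • Bᵀ 1 := by
    funext r
    have h3 := hw r
    simp only [Pi.add_apply, Pi.smul_apply, smul_eq_mul, transpose_apply]
    linear_combination h3
  have hspan : span K (Set.range Bᵀ) = span K ({Bᵀ 0, Bᵀ 1} : Set (Fin n → K)) := by
    apply le_antisymm
    · rw [span_le]
      rintro z ⟨j, rfl⟩
      fin_cases j
      · exact subset_span (Set.mem_insert _ _)
      · exact subset_span (Set.mem_insert_of_mem _ rfl)
      · show Bᵀ 2 ∈ _
        rw [hC]
        exact add_mem (smul_mem _ _ (subset_span (Set.mem_insert _ _)))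
          (smul_mem _ _ (subset_span (Set.mem_insert_of_mem _ rfl)))
    · apply span_mono
      rintro z (rfl | rfl)
      exacts [⟨0, rfl⟩, ⟨1, rfl⟩]
  have hrk : B.rank = Module.finrank K (span K ({Bᵀ 0, Bᵀ 1} : Set (Fin n → K))) := by
    exact (Matrix.rank_eq_finrank_span_cols (A := B)).trans (by rw [← hspan]; rfl)
  by_cases hind : LinearIndependent K ![Bᵀ 0, Bᵀ 1]
  · exact h2 ⟨by rw [hrk, finrank_span_pair_eq_two hind], hind⟩
  · have hle1 : B.rank ≤ 1 := by rw [hrk]; exact finrank_span_pair_le_one hind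
    have h0 : B.rank = 0 := by omega
    have hbot : span K ({Bᵀ 0, Bᵀ 1} : Set (Fin n → K)) = ⊥ := by
      rw [← Submodule.finrank_eq_zero, ← hrk, h0]
    have hx : Bᵀ 0 = 0 := by
      have hm : Bᵀ 0 ∈ span K ({Bᵀ 0, Bᵀ 1} : Set (Fin n → K)) :=
        subset_span (Set.mem_insert _ _)
      rw [hbot] at hm
      simpa using hm
    have hy : Bᵀ 1 = 0 := by
      have hm : Bᵀ 1 ∈ span K ({Bᵀ 0, Bᵀ 1} : Set (Fin n → K)) :=
        subset_span (Set.mem_insert_of_mem _ rfl)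
      rw [hbot] at hm
      simpa using hm
    exact hrow ⟨0, hn⟩ ⟨congrFun hx ⟨0, hn⟩, congrFun hy ⟨0, hn⟩⟩

lemma card_sol_le {n : ℕ} (B : Matrix (Fin n) (Fin 3) K) (t0 : Fin n)
    (h : ¬(B t0 0 = 0 ∧ B t0 1 = 0)) :
    (univ.filter fun w : K × K => ∀ t, w.1 * B t 0 + w.2 * B t 1 + B t 2 = 0).card
      ≤ Fintype.card K := by
  rw [← card_line (B t0 0) (B t0 1) (B t0 2) h]
  apply Finset.card_le_card
  intro w hw
  rw [Finset.mem_filter] at hw ⊢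
  exact ⟨hw.1, hw.2 t0⟩

lemma card_sol_single (B : Matrix (Fin 1) (Fin 3) K) (h : ¬(B 0 0 = 0 ∧ B 0 1 = 0)) :
    (univ.filter fun w : K × K => ∀ t, w.1 * B t 0 + w.2 * B t 1 + B t 2 = 0).card
      = Fintype.card K := by
  rw [← card_line (B 0 0) (B 0 1) (B 0 2) h]
  congr 1
  apply Finset.filter_congr
  intro w _
  simp [Fin.forall_fin_one]

end Aux

section Bridge

open MvPolynomial Matrix Finset

lemma taylor_dvd (f : MvPolynomial (Fin 2) ℤ) (p x y k l : ℕ) :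
    (p:ℤ)^2 ∣ eval ![(k:ℤ)*p + x, (l:ℤ)*p + y] f
      - eval ![(x:ℤ), (y:ℤ)] f
      - p*k * eval ![(x:ℤ),(y:ℤ)] (pderiv 0 f)
      - p*l * eval ![(x:ℤ),(y:ℤ)] (pderiv 1 f) := by
  have h := taylor2_s18 f x y k l p
  have hv : ![(x:ℤ) + (p:ℤ)*k, (y:ℤ) + (p:ℤ)*l] = ![(k:ℤ)*p + x, (l:ℤ)*p + y] := by
    funext r
    fin_cases r <;> simp <;> ring
  rwa [hv] at h

lemma mod_p_of_cond (f : MvPolynomial (Fin 2) ℤ) (p x y k l : ℕ)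
    (h : (p:ℤ)^2 ∣ eval ![(k:ℤ)*p + x, (l:ℤ)*p + y] f) :
    (p:ℤ) ∣ eval ![(x:ℤ),(y:ℤ)] f := by
  obtain ⟨R, hR⟩ := taylor_dvd f p x y k l
  obtain ⟨S, hS⟩ := h
  refine ⟨(p:ℤ)*S - k * eval ![(x:ℤ),(y:ℤ)] (pderiv 0 f)
    - l * eval ![(x:ℤ),(y:ℤ)] (pderiv 1 f) - p*R, ?_⟩
  linear_combination hS - hR

lemma cond_iff (f : MvPolynomial (Fin 2) ℤ) {p : ℕ} (hp : p.Prime) (x y k l : ℕ)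
    (hx : (p:ℤ) ∣ eval ![(x:ℤ),(y:ℤ)] f) :
    ((p:ℤ)^2 ∣ eval ![(k:ℤ)*p + x, (l:ℤ)*p + y] f)
      ↔ (k : ZMod p) * ((eval ![(x:ℤ),(y:ℤ)] (pderiv 0 f) : ℤ) : ZMod p)
        + (l : ZMod p) * ((eval ![(x:ℤ),(y:ℤ)] (pderiv 1 f) : ℤ) : ZMod p)
        + ((eval ![(x:ℤ),(y:ℤ)] f / (p:ℤ) : ℤ) : ZMod p) = 0 := by
  have hp0 : (p:ℤ) ≠ 0 := Int.natCast_ne_zero.mpr hp.ne_zero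
  obtain ⟨m, hm⟩ := hx
  obtain ⟨R, hR⟩ := taylor_dvd f p x y k l
  set D0 := eval ![(x:ℤ),(y:ℤ)] (pderiv 0 f) with hD0
  set D1 := eval ![(x:ℤ),(y:ℤ)] (pderiv 1 f) with hD1
  have hdiv : eval ![(x:ℤ),(y:ℤ)] f / (p:ℤ) = m := by
    rw [hm, Int.mul_ediv_cancel_left _ hp0]
  have hshift : eval ![(k:ℤ)*p + x, (l:ℤ)*p + y] f
      = (p:ℤ) * ((m + k*D0 + l*D1) + p*R) := by
    linear_combination hR + hm
  rw [hdiv, hshift, pow_two, mul_dvd_mul_iff_left hp0]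
  have hz : (p:ℤ) ∣ (m + (k:ℤ)*D0 + (l:ℤ)*D1) + (p:ℤ)*R ↔ (p:ℤ) ∣ m + (k:ℤ)*D0 + (l:ℤ)*D1 := by
    constructor
    · intro h
      have h2 := dvd_sub h ⟨R, rfl⟩
      simpa using h2
    · intro h
      exact dvd_add h ⟨R, rfl⟩
  rw [hz, ← ZMod.intCast_zmod_eq_zero_iff_dvd]
  push_cast
  constructor <;> intro h <;> linear_combination h

lemma mem_tuples_iff {f : MvPolynomial (Fin 2) ℤ} {p i : ℕ} {P : Fin i → ℕ × ℕ} :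
    P ∈ tuples f p i ↔ (∀ t, P t ∈ curvePts f p) ∧ Function.Injective P := by
  rw [tuples, Finset.mem_filter, Fintype.mem_piFinset]

lemma mem_curvePts_iff {f : MvPolynomial (Fin 2) ℤ} {p : ℕ} {xy : ℕ × ℕ} :
    xy ∈ curvePts f p ↔ xy ∈ Finset.range p ×ˢ Finset.range p
      ∧ (p:ℤ) ∣ eval ![(xy.1:ℤ),(xy.2:ℤ)] f := by
  unfold curvePts
  exact Finset.mem_filter

lemma count_eq (f : MvPolynomial (Fin 2) ℤ) {p : ℕ} [NeZero p] (hp : p.Prime) (i : ℕ) :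
    ∑ kl ∈ Finset.range p ×ˢ Finset.range p, (Xrv f p kl).descFactorial i
      = ∑ P ∈ tuples f p i,
          (Finset.univ.filter fun w : ZMod p × ZMod p =>
            ∀ t, w.1 * Bmat f p i P t 0 + w.2 * Bmat f p i P t 1 + Bmat f p i P t 2 = 0).card := by
  classical
  haveI := Fact.mk hp
  have h1 : ∀ kl ∈ Finset.range p ×ˢ Finset.range p,
      (Xrv f p kl).descFactorial i
        = ((tuples f p i).filter (fun P => ∀ t, (p:ℤ)^2 ∣
            eval ![(kl.1:ℤ)*p + ((P t).1:ℤ), (kl.2:ℤ)*p + ((P t).2:ℤ)] f)).card := by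
    intro kl _
    rw [Xrv, ← card_injective_tuples]
    congr 1
    ext P
    rw [Finset.mem_filter, Finset.mem_filter, Fintype.mem_piFinset]
    constructor
    · rintro ⟨hmem, hinj⟩
      have hmem' := fun t => Finset.mem_filter.mp (hmem t)
      exact ⟨mem_tuples_iff.mpr ⟨fun t => mem_curvePts_iff.mpr
          ⟨(hmem' t).1, mod_p_of_cond f p _ _ _ _ (hmem' t).2⟩, hinj⟩,
        fun t => (hmem' t).2⟩
    · rintro ⟨hP, hc⟩
      obtain ⟨hcur, hinj⟩ := mem_tuples_iff.mp hP
      exact ⟨fun t => Finset.mem_filter.mpr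
          ⟨(mem_curvePts_iff.mp (hcur t)).1, hc t⟩, hinj⟩
  rw [Finset.sum_congr rfl h1]
  simp only [Finset.card_filter]
  rw [Finset.sum_comm]
  refine Finset.sum_congr rfl fun P hP => ?_
  obtain ⟨hcur, hinj⟩ := mem_tuples_iff.mp hP
  have hiff : ∀ (q r : ℕ), ∀ t : Fin i,
      ((p:ℤ)^2 ∣ eval ![(q:ℤ)*p + ((P t).1:ℤ), (r:ℤ)*p + ((P t).2:ℤ)] f
        ↔ (q : ZMod p) * Bmat f p i P t 0 + (r : ZMod p) * Bmat f p i P t 1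
            + Bmat f p i P t 2 = 0) := by
    intro q r t
    have hcv := (mem_curvePts_iff.mp (hcur t)).2
    have := cond_iff f hp (P t).1 (P t).2 q r hcv
    convert this using 2
    rfl
  rw [← Finset.card_filter, ← Finset.card_filter]
  refine Finset.card_bij' (fun kl _ => ((kl.1 : ZMod p), (kl.2 : ZMod p)))
    (fun w _ => (w.1.val, w.2.val)) ?_ ?_ ?_ ?_
  · intro kl hkl
    rw [Finset.mem_filter] at hkl
    rw [Finset.mem_filter]
    exact ⟨Finset.mem_univ _, fun t => (hiff kl.1 kl.2 t).mp (hkl.2 t)⟩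
  · intro w hw
    rw [Finset.mem_filter] at hw
    rw [Finset.mem_filter, Finset.mem_product, Finset.mem_range, Finset.mem_range]
    refine ⟨⟨ZMod.val_lt _, ZMod.val_lt _⟩, fun t => ?_⟩
    refine (hiff w.1.val w.2.val t).mpr ?_
    simp only [ZMod.natCast_val, ZMod.cast_id', id_eq]
    exact hw.2 t
  · intro kl hkl
    rw [Finset.mem_filter, Finset.mem_product, Finset.mem_range, Finset.mem_range] at hkl
    ext
    · exact ZMod.val_cast_of_lt hkl.1.1
    · exact ZMod.val_cast_of_lt hkl.1.2
  · intro w hw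
    ext <;> simp [ZMod.natCast_val, ZMod.cast_id']

end Bridge

theorem stmt_18 (f : MvPolynomial (Fin 2) ℤ)
    (hgrad : ∀ᶠ p in primesFilter, ∀ xy ∈ curvePts f p,
      ¬ ((p : ℤ) ∣ MvPolynomial.eval ![(xy.1 : ℤ), (xy.2 : ℤ)] (MvPolynomial.pderiv 0 f) ∧
         (p : ℤ) ∣ MvPolynomial.eval ![(xy.1 : ℤ), (xy.2 : ℤ)] (MvPolynomial.pderiv 1 f)))
    (hm : Tendsto (fun p : ℕ => ((curvePts f p).card : ℝ) / p) primesFilter (nhds 1))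
    (hmk2 : ∀ k : ℕ, 2 ≤ k →
      Tendsto (fun p : ℕ => (mk2 f p k : ℝ) / (p : ℝ) ^ 2) primesFilter (nhds 1))
    (hmk1 : ∀ k : ℕ, 2 ≤ k →
      Tendsto (fun p : ℕ => (mk1 f p k : ℝ) / p) primesFilter (nhds 0)) :
    ∀ k : ℕ, 1 ≤ k →
      Tendsto (fun p : ℕ =>
          (∑ kl ∈ Finset.range p ×ˢ Finset.range p, (Xrv f p kl : ℝ) ^ k) / (p : ℝ) ^ 2)
        primesFilter
        (nhds (∑ i ∈ Finset.Icc 1 k, (stirling2 k i : ℝ))) := by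
  classical
  have hprimef : ∀ᶠ p in primesFilter, p.Prime :=
    Filter.Eventually.filter_mono inf_le_right
      (Filter.eventually_principal.mpr (fun p (hp : p ∈ {q : ℕ | q.Prime}) => hp))
  have hrow : ∀ {p : ℕ}, p.Prime →
      (∀ xy ∈ curvePts f p,
        ¬ ((p : ℤ) ∣ MvPolynomial.eval ![(xy.1 : ℤ), (xy.2 : ℤ)] (MvPolynomial.pderiv 0 f) ∧
           (p : ℤ) ∣ MvPolynomial.eval ![(xy.1 : ℤ), (xy.2 : ℤ)] (MvPolynomial.pderiv 1 f))) →
      ∀ {i : ℕ} {P : Fin i → ℕ × ℕ}, P ∈ tuples f p i → ∀ t : Fin i,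
        ¬ (Bmat f p i P t 0 = 0 ∧ Bmat f p i P t 1 = 0) := by
    intro p hp hg i P hP t ⟨h0, h1⟩
    have hcv := (mem_tuples_iff.mp hP).1 t
    refine hg (P t) hcv ⟨?_, ?_⟩
    · exact (ZMod.intCast_zmod_eq_zero_iff_dvd _ p).mp h0
    · exact (ZMod.intCast_zmod_eq_zero_iff_dvd _ p).mp h1
  have hDi : ∀ i : ℕ, 1 ≤ i → Tendsto (fun p : ℕ =>
      ((∑ kl ∈ Finset.range p ×ˢ Finset.range p, (Xrv f p kl).descFactorial i : ℕ) : ℝ) / (p:ℝ)^2)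
      primesFilter (nhds 1) := by
    intro i hi
    rcases eq_or_lt_of_le hi with hi1 | h2i
    · -- i = 1
      subst hi1
      have hev : (fun p : ℕ => ((curvePts f p).card : ℝ) / p) =ᶠ[primesFilter]
          (fun p : ℕ => ((∑ kl ∈ Finset.range p ×ˢ Finset.range p,
            (Xrv f p kl).descFactorial 1 : ℕ) : ℝ) / (p:ℝ)^2) := by
        filter_upwards [hprimef, hgrad] with p hp hg
        haveI := Fact.mk hp
        haveI : NeZero p := ⟨hp.ne_zero⟩
        rw [count_eq f hp 1]
        have hsol : ∀ P ∈ tuples f p 1,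
            (Finset.univ.filter fun w : ZMod p × ZMod p =>
              ∀ t, w.1 * Bmat f p 1 P t 0 + w.2 * Bmat f p 1 P t 1 + Bmat f p 1 P t 2 = 0).card
            = p := by
          intro P hP
          rw [card_sol_single _ (hrow hp hg hP 0), ZMod.card]
        rw [Finset.sum_congr rfl hsol, Finset.sum_const, smul_eq_mul]
        have hc1 : (tuples f p 1).card = (curvePts f p).card := by
          rw [tuples, Finset.filter_true_of_mem
            (fun P _ => Function.injective_of_subsingleton P), Fintype.card_piFinset]
          simp
        rw [hc1]
        have hp0 : (p:ℝ) ≠ 0 := Nat.cast_ne_zero.mpr hp.ne_zero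
        push_cast
        field_simp
      exact Filter.Tendsto.congr' hev hm
    · -- 2 ≤ i
      have hbounds : ∀ᶠ p in primesFilter,
          (mk2 f p i : ℝ)/(p:ℝ)^2
            ≤ ((∑ kl ∈ Finset.range p ×ˢ Finset.range p,
                (Xrv f p kl).descFactorial i : ℕ) : ℝ) / (p:ℝ)^2
          ∧ ((∑ kl ∈ Finset.range p ×ˢ Finset.range p,
                (Xrv f p kl).descFactorial i : ℕ) : ℝ) / (p:ℝ)^2
            ≤ (mk2 f p i : ℝ)/(p:ℝ)^2 + (mk1 f p i : ℝ)/(p:ℝ) := by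
        filter_upwards [hprimef, hgrad] with p hp hg
        haveI := Fact.mk hp
        haveI : NeZero p := ⟨hp.ne_zero⟩
        set N : (Fin i → ℕ × ℕ) → ℕ := fun P =>
          (Finset.univ.filter fun w : ZMod p × ZMod p =>
            ∀ t, w.1 * Bmat f p i P t 0 + w.2 * Bmat f p i P t 1 + Bmat f p i P t 2 = 0).card
          with hN
        have hcount := count_eq f hp i
        set c2 : (Fin i → ℕ × ℕ) → Prop := fun P => (Bmat f p i P).rank = 2 ∧
          LinearIndependent (ZMod p) ![(Bmat f p i P)ᵀ 0, (Bmat f p i P)ᵀ 1] with hc2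
        have hmk2card : mk2 f p i = ((tuples f p i).filter c2).card := by
          rw [mk2]
        have hmk1card : mk1 f p i
            = ((tuples f p i).filter (fun P => (Bmat f p i P).rank = 1)).card := by
          rw [mk1]
        have hone : ∀ P ∈ (tuples f p i).filter c2, N P = 1 := by
          intro P hP
          obtain hc := (Finset.mem_filter.mp hP).2
          exact card_sol_two _ hc.1 hc.2
        have hlow : mk2 f p i ≤ ∑ P ∈ tuples f p i, N P := by
          rw [hmk2card]
          calc ((tuples f p i).filter c2).card = ∑ P ∈ (tuples f p i).filter c2, N P := by
                rw [Finset.card_eq_sum_ones]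
                exact Finset.sum_congr rfl fun P hP => (hone P hP).symm
            _ ≤ ∑ P ∈ tuples f p i, N P :=
                Finset.sum_le_sum_of_subset (Finset.filter_subset _ _)
        have hup : ∑ P ∈ tuples f p i, N P ≤ mk2 f p i + mk1 f p i * p := by
          rw [← Finset.sum_filter_add_sum_filter_not (tuples f p i) c2 N]
          have e1 : ∑ P ∈ (tuples f p i).filter c2, N P = mk2 f p i := by
            rw [hmk2card, Finset.card_eq_sum_ones]
            exact Finset.sum_congr rfl hone
          have e2 : ∑ P ∈ (tuples f p i).filter (fun P => ¬ c2 P), N P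
              ≤ mk1 f p i * p := by
            have step : ∀ P ∈ (tuples f p i).filter (fun P => ¬ c2 P),
                N P ≤ if (Bmat f p i P).rank = 1 then p else 0 := by
              intro P hP
              rw [Finset.mem_filter] at hP
              obtain ⟨hPt, hnc2⟩ := hP
              by_cases hr : (Bmat f p i P).rank = 1
              · rw [if_pos hr, ← ZMod.card p]
                exact card_sol_le _ ⟨0, by omega⟩ (hrow hp hg hPt ⟨0, by omega⟩)
              · rw [if_neg hr]
                exact le_of_eq
                  (card_sol_other (by omega) _ (fun t => hrow hp hg hPt t) hr hnc2)
            calc ∑ P ∈ (tuples f p i).filter (fun P => ¬ c2 P), N P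
                ≤ ∑ P ∈ (tuples f p i).filter (fun P => ¬ c2 P),
                    (if (Bmat f p i P).rank = 1 then p else 0) := Finset.sum_le_sum step
              _ = ∑ P ∈ ((tuples f p i).filter (fun P => ¬ c2 P)).filter
                    (fun P => (Bmat f p i P).rank = 1), p := (Finset.sum_filter _ _).symm
              _ = (((tuples f p i).filter (fun P => ¬ c2 P)).filter
                    (fun P => (Bmat f p i P).rank = 1)).card * p := by
                  rw [Finset.sum_const, smul_eq_mul]
              _ ≤ mk1 f p i * p := by
                  apply Nat.mul_le_mul_right
                  rw [hmk1card]
                  apply Finset.card_le_card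
                  intro P hP
                  rw [Finset.mem_filter] at hP ⊢
                  exact ⟨(Finset.mem_filter.mp hP.1).1, hP.2⟩
          rw [e1]
          exact Nat.add_le_add_left e2 _
        have hp0 : (0:ℝ) < (p:ℝ) := Nat.cast_pos.mpr hp.pos
        have hp2 : (0:ℝ) < (p:ℝ)^2 := by positivity
        rw [hcount]
        constructor
        · apply div_le_div_of_nonneg_right ?_ hp2.le
          exact_mod_cast hlow
        · calc (((∑ P ∈ tuples f p i, N P : ℕ)) : ℝ) / (p:ℝ)^2
              ≤ ((mk2 f p i + mk1 f p i * p : ℕ) : ℝ) / (p:ℝ)^2 := by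
                apply div_le_div_of_nonneg_right ?_ hp2.le
                exact_mod_cast hup
            _ = (mk2 f p i : ℝ)/(p:ℝ)^2 + (mk1 f p i : ℝ)/(p:ℝ) := by
                push_cast
                rw [add_div]
                congr 1
                rw [sq, mul_div_mul_right _ _ (ne_of_gt hp0)]
      have hupperlim : Tendsto (fun p : ℕ => (mk2 f p i : ℝ)/(p:ℝ)^2 + (mk1 f p i : ℝ)/(p:ℝ))
          primesFilter (nhds 1) := by
        have := (hmk2 i h2i).add (hmk1 i h2i)
        simpa using this
      exact tendsto_of_tendsto_of_tendsto_of_le_of_le' (hmk2 i h2i) hupperlim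
        (hbounds.mono fun p h => h.1) (hbounds.mono fun p h => h.2)
  intro k hk
  obtain ⟨k', rfl⟩ : ∃ k', k = k' + 1 := ⟨k - 1, by omega⟩
  have hfun : ∀ p : ℕ,
      (∑ kl ∈ Finset.range p ×ˢ Finset.range p, (Xrv f p kl : ℝ) ^ (k'+1)) / (p:ℝ)^2
      = ∑ i ∈ Finset.Icc 1 (k'+1), (stirling2 (k'+1) i : ℝ) *
          (((∑ kl ∈ Finset.range p ×ˢ Finset.range p,
            (Xrv f p kl).descFactorial i : ℕ) : ℝ) / (p:ℝ)^2) := by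
    intro p
    have hnat : ∑ kl ∈ Finset.range p ×ˢ Finset.range p, (Xrv f p kl) ^ (k'+1)
        = ∑ i ∈ Finset.Icc 1 (k'+1), stirling2 (k'+1) i *
            ∑ kl ∈ Finset.range p ×ˢ Finset.range p, (Xrv f p kl).descFactorial i := by
      calc ∑ kl ∈ Finset.range p ×ˢ Finset.range p, (Xrv f p kl) ^ (k'+1)
          = ∑ kl ∈ Finset.range p ×ˢ Finset.range p, ∑ i ∈ Finset.range (k'+2),
              stirling2 (k'+1) i * (Xrv f p kl).descFactorial i :=
            Finset.sum_congr rfl fun kl _ => pow_eq_sum_stirling (k'+1) _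
        _ = ∑ i ∈ Finset.range (k'+2), ∑ kl ∈ Finset.range p ×ˢ Finset.range p,
              stirling2 (k'+1) i * (Xrv f p kl).descFactorial i := Finset.sum_comm
        _ = ∑ i ∈ Finset.range (k'+2), stirling2 (k'+1) i *
              ∑ kl ∈ Finset.range p ×ˢ Finset.range p, (Xrv f p kl).descFactorial i :=
            Finset.sum_congr rfl fun i _ => (Finset.mul_sum _ _ _).symm
        _ = ∑ i ∈ Finset.Icc 1 (k'+1), stirling2 (k'+1) i *
              ∑ kl ∈ Finset.range p ×ˢ Finset.range p, (Xrv f p kl).descFactorial i := by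
            rw [Finset.sum_range_succ' (fun i => stirling2 (k'+1) i *
              ∑ kl ∈ Finset.range p ×ˢ Finset.range p, (Xrv f p kl).descFactorial i) (k'+1)]
            have h0 : stirling2 (k'+1) 0 *
                ∑ kl ∈ Finset.range p ×ˢ Finset.range p, (Xrv f p kl).descFactorial 0 = 0 := by
              show 0 * _ = 0
              ring
            rw [h0, add_zero, ← Finset.Ico_add_one_right_eq_Icc, Finset.sum_Ico_eq_sum_range]
            refine Finset.sum_congr (by norm_num) fun j _ => by rw [add_comm 1 j]
    calc (∑ kl ∈ Finset.range p ×ˢ Finset.range p, (Xrv f p kl : ℝ) ^ (k'+1)) / (p:ℝ)^2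
        = ((∑ kl ∈ Finset.range p ×ˢ Finset.range p, (Xrv f p kl) ^ (k'+1) : ℕ) : ℝ) / (p:ℝ)^2 := by
          push_cast
          rfl
      _ = ((∑ i ∈ Finset.Icc 1 (k'+1), stirling2 (k'+1) i *
            ∑ kl ∈ Finset.range p ×ˢ Finset.range p,
              (Xrv f p kl).descFactorial i : ℕ) : ℝ) / (p:ℝ)^2 := by rw [hnat]
      _ = _ := by
          push_cast
          rw [Finset.sum_div]
          exact Finset.sum_congr rfl fun i _ => by ring
  simp only [hfun]
  have hlim := tendsto_finset_sum (Finset.Icc 1 (k'+1))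
    (fun i hi => Filter.Tendsto.const_mul ((stirling2 (k'+1) i : ℝ))
      (hDi i (Finset.mem_Icc.mp hi).1))
  simpa using hlim
end
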